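/- Let n ≥ 1, p > 2, δ₁, …, δ_n ≥ 0 and ε ∈ (0, 1). For ξ, ζ ∈ ℝⁿ set Q(ξ, ζ) = (p−1)·∑_{i=1}^n (|ξ_i| − δ_i)₊^{p−2}·ζ_i² + ε·(1 + |ξ|²)^{(p−2)/2}·|ζ|² + ε·(p−2)·(1 + |ξ|²)^{(p−4)/2}·⟨ξ, ζ⟩². Then for every ξ, ζ ∈ ℝⁿ one has ε·(1 + |ξ|²)^{(p−2)/2}·|ζ|² ≤ Q(ξ, ζ) ≤ (1 + ε)·(p−1)·(1 + |ξ|²)^{(p−2)/2}·|ζ|². -/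

import Mathlib

/-- The quadratic form `⟨D²F_ε(ξ)ζ, ζ⟩` associated with the regularized orthotropic
integrand `F_ε(ξ) = ∑ᵢ (1/p)(|ξᵢ| − δᵢ)₊^p + (ε/p)(1 + |ξ|²)^{p/2}`. -/
noncomputable def Qform (n : ℕ) (p ε : ℝ) (δ : Fin n → ℝ)
    (ξ ζ : EuclideanSpace ℝ (Fin n)) : ℝ :=
  (p - 1) * ∑ i, (max (|ξ i| - δ i) 0) ^ (p - 2) * ζ i ^ 2
    + ε * (1 + ‖ξ‖ ^ 2) ^ ((p - 2) / 2) * ‖ζ‖ ^ 2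
    + ε * (p - 2) * (1 + ‖ξ‖ ^ 2) ^ ((p - 4) / 2) * (inner ℝ ξ ζ : ℝ) ^ 2

/-- Let `n ≥ 1`, `p > 2`, `δ₁, …, δ_n ≥ 0` and `ε ∈ (0, 1)`. Then for every
`ξ, ζ ∈ ℝⁿ` one has
`ε·(1 + |ξ|²)^{(p−2)/2}·|ζ|² ≤ Q(ξ, ζ) ≤ (1 + ε)·(p−1)·(1 + |ξ|²)^{(p−2)/2}·|ζ|²`. -/
theorem stmt3 (n : ℕ) (hn : 1 ≤ n) (p : ℝ) (hp : 2 < p) (δ : Fin n → ℝ)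
    (hδ : ∀ i, 0 ≤ δ i) (ε : ℝ) (hε : ε ∈ Set.Ioo (0:ℝ) 1)
    (ξ ζ : EuclideanSpace ℝ (Fin n)) :
    ε * (1 + ‖ξ‖ ^ 2) ^ ((p - 2) / 2) * ‖ζ‖ ^ 2 ≤ Qform n p ε δ ξ ζ ∧
      Qform n p ε δ ξ ζ ≤ (1 + ε) * (p - 1) * (1 + ‖ξ‖ ^ 2) ^ ((p - 2) / 2) * ‖ζ‖ ^ 2 := by
  obtain ⟨hε0, hε1⟩ := hε
  have h1x : (0:ℝ) < 1 + ‖ξ‖ ^ 2 := by positivity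
  have hp1 : (0:ℝ) < p - 1 := by linarith
  have hp2 : (0:ℝ) ≤ p - 2 := by linarith
  have hsum_nonneg : 0 ≤ ∑ i, (max (|ξ i| - δ i) 0) ^ (p - 2) * ζ i ^ 2 := by
    apply Finset.sum_nonneg
    intro i _
    have : (0:ℝ) ≤ max (|ξ i| - δ i) 0 := le_max_right _ _
    positivity
  have hthird_nonneg : 0 ≤ ε * (p - 2) * (1 + ‖ξ‖ ^ 2) ^ ((p - 4) / 2) * (inner ℝ ξ ζ : ℝ) ^ 2 := by
    have := Real.rpow_nonneg h1x.le ((p - 4) / 2)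
    positivity
  constructor
  · unfold Qform
    nlinarith [Real.rpow_nonneg h1x.le ((p - 2) / 2), sq_nonneg ‖ζ‖]
  · -- Upper bound
    have hnz : ‖ζ‖ ^ 2 = ∑ i, ζ i ^ 2 := by
      rw [PiLp.norm_sq_eq_of_L2]
      simp [Real.norm_eq_abs, sq_abs]
    -- each coordinate bound
    have hcoord : ∀ i, (max (|ξ i| - δ i) 0) ^ (p - 2) ≤ (1 + ‖ξ‖ ^ 2) ^ ((p - 2) / 2) := by
      intro i
      have hxi : |ξ i| ^ 2 ≤ ‖ξ‖ ^ 2 := by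
        rw [PiLp.norm_sq_eq_of_L2]
        have : |ξ i| ^ 2 ≤ ∑ j, ‖ξ j‖ ^ 2 := by
          have := Finset.single_le_sum (f := fun j => ‖ξ j‖ ^ 2)
            (fun j _ => by positivity) (Finset.mem_univ i)
          simpa [Real.norm_eq_abs] using this
        exact this
      have hm : max (|ξ i| - δ i) 0 ≤ Real.sqrt (1 + ‖ξ‖ ^ 2) := by
        have h1 : max (|ξ i| - δ i) 0 ≤ |ξ i| :=
          max_le (by linarith [hδ i, abs_nonneg (ξ i)]) (abs_nonneg _)
        have h2 : |ξ i| ≤ Real.sqrt (1 + ‖ξ‖ ^ 2) := by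
          have := Real.sqrt_le_sqrt (show |ξ i| ^ 2 ≤ 1 + ‖ξ‖ ^ 2 by linarith)
          simpa [Real.sqrt_sq_eq_abs, abs_abs] using this
        linarith
      calc (max (|ξ i| - δ i) 0) ^ (p - 2)
          ≤ (Real.sqrt (1 + ‖ξ‖ ^ 2)) ^ (p - 2) :=
            Real.rpow_le_rpow (le_max_right _ _) hm hp2
        _ = (1 + ‖ξ‖ ^ 2) ^ ((p - 2) / 2) := by
            rw [Real.sqrt_eq_rpow, ← Real.rpow_mul h1x.le]
            ring_nf
    have hsum_le : ∑ i, (max (|ξ i| - δ i) 0) ^ (p - 2) * ζ i ^ 2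
        ≤ (1 + ‖ξ‖ ^ 2) ^ ((p - 2) / 2) * ‖ζ‖ ^ 2 := by
      rw [hnz, Finset.mul_sum]
      apply Finset.sum_le_sum
      intro i _
      exact mul_le_mul_of_nonneg_right (hcoord i) (sq_nonneg _)
    have hcs : (inner ℝ ξ ζ : ℝ) ^ 2 ≤ ‖ξ‖ ^ 2 * ‖ζ‖ ^ 2 := by
      have := abs_real_inner_le_norm ξ ζ
      nlinarith [abs_nonneg (inner ℝ ξ ζ : ℝ), norm_nonneg ξ, norm_nonneg ζ,
        sq_abs (inner ℝ ξ ζ : ℝ)]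
    have hrw : (1 + ‖ξ‖ ^ 2) ^ ((p - 4) / 2) * (1 + ‖ξ‖ ^ 2)
        = (1 + ‖ξ‖ ^ 2) ^ ((p - 2) / 2) := by
      rw [show ((p - 2) / 2) = (p - 4) / 2 + 1 by ring, Real.rpow_add h1x, Real.rpow_one]
    have hthird_le : (1 + ‖ξ‖ ^ 2) ^ ((p - 4) / 2) * (inner ℝ ξ ζ : ℝ) ^ 2
        ≤ (1 + ‖ξ‖ ^ 2) ^ ((p - 2) / 2) * ‖ζ‖ ^ 2 := by
      have h4 : (0:ℝ) ≤ (1 + ‖ξ‖ ^ 2) ^ ((p - 4) / 2) := Real.rpow_nonneg h1x.le _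
      calc (1 + ‖ξ‖ ^ 2) ^ ((p - 4) / 2) * (inner ℝ ξ ζ : ℝ) ^ 2
          ≤ (1 + ‖ξ‖ ^ 2) ^ ((p - 4) / 2) * (‖ξ‖ ^ 2 * ‖ζ‖ ^ 2) :=
            mul_le_mul_of_nonneg_left hcs h4
        _ ≤ (1 + ‖ξ‖ ^ 2) ^ ((p - 4) / 2) * ((1 + ‖ξ‖ ^ 2) * ‖ζ‖ ^ 2) := by
            apply mul_le_mul_of_nonneg_left _ h4
            nlinarith [sq_nonneg ‖ζ‖]
        _ = (1 + ‖ξ‖ ^ 2) ^ ((p - 2) / 2) * ‖ζ‖ ^ 2 := by rw [← hrw]; ring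
    unfold Qform
    set B := (1 + ‖ξ‖ ^ 2) ^ ((p - 2) / 2) * ‖ζ‖ ^ 2 with hB
    have hεp : 0 ≤ ε * (p - 2) := by positivity
    nlinarith [mul_le_mul_of_nonneg_left hthird_le hεp, mul_le_mul_of_nonneg_left hsum_le hp1.le]
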